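/- Over a field of characteristic 2, there exists a 4-dimensional solvable Lie algebra L with basis x₁,x₂,x₃,x₄ and products [x₄,x₂]=x₁, [x₃,x₁]=x₁, [x₃,x₂]=x₂ (all other basis brackets zero) whose nilradical is span{x₁,x₂,x₄}, and a derivation D of L with D(x₁)=x₂, D(x₂)=0, D(x₃)=0, D(x₄)=x₃; in particular D does not preserve the nilradical, so N(L) is not a characteristic ideal. -/

import Mathlib

/-- The canonical quotient map `L → L ⧸ I` as a morphism of Lie algebras. -/
def lieQuotMk {F L : Type*} [Field F] [LieRing L] [LieAlgebra F L] (I : LieIdeal F L) :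
    L →ₗ⁅F⁆ L ⧸ I where
  toLinearMap := (LieSubmodule.Quotient.mk' I).toLinearMap
  map_lie' := rfl

variable (F : Type*) [Field F]

/-- The nilradical: the largest nilpotent ideal of a (finite-dimensional) Lie algebra. -/
noncomputable def nilrad (L : Type*) [LieRing L] [LieAlgebra F L] : LieIdeal F L :=
  sSup {I : LieIdeal F L | LieRing.IsNilpotent I}

/-- The upper nilpotent series: `N 0 = 0`, `N (i+1) / N i = nilradical of L ⧸ N i`. -/
noncomputable def upperNil (L : Type*) [LieRing L] [LieAlgebra F L] : ℕ → LieIdeal F L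
  | 0 => ⊥
  | n + 1 => LieIdeal.comap (lieQuotMk (upperNil L n)) (nilrad F (L ⧸ upperNil L n))

/-- The nilpotent length: the least `n` with `N n = L`. -/
noncomputable def nilLen (L : Type*) [LieRing L] [LieAlgebra F L] : ℕ :=
  sInf {n : ℕ | upperNil F L n = ⊤}

/-- The nilpotent residual `γ∞(L)`: the smallest ideal with nilpotent quotient. -/
noncomputable def nilResidual (L : Type*) [LieRing L] [LieAlgebra F L] : LieIdeal F L :=
  sInf {I : LieIdeal F L | LieRing.IsNilpotent (L ⧸ I)}

/-- The lower nilpotent series: `Γ 0 = L`, `Γ (i+1) = γ∞(Γ i)`, viewed as subalgebras of `L`. -/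
noncomputable def lowerNil (L : Type*) [LieRing L] [LieAlgebra F L] : ℕ → LieSubalgebra F L
  | 0 => ⊤
  | n + 1 =>
      LieSubalgebra.map (lowerNil L n).incl
        ((nilResidual F (lowerNil L n)).toLieSubalgebra)

/-- `M` is a maximal (proper) subalgebra of `L`. -/
def IsMaxSub {L : Type*} [LieRing L] [LieAlgebra F L] (M : LieSubalgebra F L) : Prop :=
  M ≠ ⊤ ∧ ∀ K : LieSubalgebra F L, M < K → K = ⊤

/-- The Frattini subalgebra: the intersection of all maximal subalgebras. -/
noncomputable def lieFrattini (L : Type*) [LieRing L] [LieAlgebra F L] : LieSubalgebra F L :=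
  sInf {M : LieSubalgebra F L | IsMaxSub F M}

/-- The core of a subalgebra `U`: the largest ideal of `L` contained in `U`. -/
noncomputable def lieCore {L : Type*} [LieRing L] [LieAlgebra F L] (U : LieSubalgebra F L) :
    LieIdeal F L :=
  sSup {I : LieIdeal F L | (I : Set L) ⊆ (U : Set L)}

/-- `A` is a minimal ideal of `L`. -/
def IsMinIdeal {L : Type*} [LieRing L] [LieAlgebra F L] (A : LieIdeal F L) : Prop :=
  A ≠ ⊥ ∧ ∀ B : LieIdeal F L, B < A → B = ⊥

/-- The Frattini series: `φ i (L) / N (i-1) (L) = φ(L ⧸ N (i-1) (L))` for `i ≥ 1`. -/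
noncomputable def fratSeries (L : Type*) [LieRing L] [LieAlgebra F L] (i : ℕ) :
    LieSubalgebra F L :=
  LieSubalgebra.comap (lieQuotMk (upperNil F L (i - 1)))
    (lieFrattini F (L ⧸ upperNil F L (i - 1)))

/-- `L` is extreme: `N i (L) / φ i (L)` is a chief factor of `L` for each `1 ≤ i ≤ n(L)`. -/
def IsExtremeLie (L : Type*) [LieRing L] [LieAlgebra F L] : Prop :=
  ∀ i, 1 ≤ i → i ≤ nilLen F L →
    (fratSeries F L i : Set L) ⊆ (upperNil F L i : Set L) ∧
    (fratSeries F L i : Set L) ≠ (upperNil F L i : Set L) ∧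
    ∀ C : LieIdeal F L, (fratSeries F L i : Set L) ⊆ (C : Set L) → C ≤ upperNil F L i →
      (C : Set L) = (fratSeries F L i : Set L) ∨ C = upperNil F L i

/-- `L` is supersolvable: it has a chain of ideals with one-dimensional quotients. -/
def IsSupersolvable (L : Type*) [LieRing L] [LieAlgebra F L] : Prop :=
  ∃ (n : ℕ) (C : ℕ → LieIdeal F L), C 0 = ⊥ ∧ C n = ⊤ ∧
    ∀ i < n, C i ≤ C (i + 1) ∧
      Module.finrank F (C (i + 1)) = Module.finrank F (C i) + 1

/-- A minimal ideal `A` is complemented if some maximal subalgebra `M` satisfies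
`L = A + M` and `A ∩ M = 0`. -/
def IsComplementedIdeal {L : Type*} [LieRing L] [LieAlgebra F L] (A : LieIdeal F L) : Prop :=
  ∃ M : LieSubalgebra F L, IsMaxSub F M ∧
    A.toSubmodule ⊔ M.toSubmodule = ⊤ ∧ A.toSubmodule ⊓ M.toSubmodule = ⊥

set_option linter.unusedSectionVars false
set_option linter.unusedSectionVars false

def XX (F : Type) : Type := Fin 4 → F

namespace XX

variable {F : Type} [Field F]

instance : AddCommGroup (XX F) := inferInstanceAs (AddCommGroup (Fin 4 → F))
instance : Module F (XX F) := inferInstanceAs (Module F (Fin 4 → F))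

def mk (v : Fin 4 → F) : XX F := v
def cf (x : XX F) : Fin 4 → F := x

@[ext] theorem ext {x y : XX F} (h : ∀ i, cf x i = cf y i) : x = y := funext h

@[simp] theorem cf_mk (v : Fin 4 → F) (i : Fin 4) : cf (mk v) i = v i := rfl
@[simp] theorem cf_add (x y : XX F) (i : Fin 4) : cf (x + y) i = cf x i + cf y i := rfl
@[simp] theorem cf_smul (c : F) (x : XX F) (i : Fin 4) : cf (c • x) i = c * cf x i := rfl
@[simp] theorem cf_neg (x : XX F) (i : Fin 4) : cf (-x) i = - cf x i := rfl
@[simp] theorem cf_sub (x y : XX F) (i : Fin 4) : cf (x - y) i = cf x i - cf y i := rfl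
@[simp] theorem cf_zero (i : Fin 4) : cf (0 : XX F) i = 0 := rfl

/-- the bracket -/
def br (x y : XX F) : XX F := mk fun i =>
  if i = 0 then cf x 3 * cf y 1 - cf x 1 * cf y 3 + cf x 2 * cf y 0 - cf x 0 * cf y 2
  else if i = 1 then cf x 2 * cf y 1 - cf x 1 * cf y 2
  else 0

theorem cf_br (x y : XX F) (i : Fin 4) : cf (br x y) i =
    if i = 0 then cf x 3 * cf y 1 - cf x 1 * cf y 3 + cf x 2 * cf y 0 - cf x 0 * cf y 2
    else if i = 1 then cf x 2 * cf y 1 - cf x 1 * cf y 2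
    else 0 := rfl

@[simp] theorem cf_br0 (x y : XX F) :
    cf (br x y) 0 = cf x 3 * cf y 1 - cf x 1 * cf y 3 + cf x 2 * cf y 0 - cf x 0 * cf y 2 := by
  simp [cf_br]
@[simp] theorem cf_br1 (x y : XX F) : cf (br x y) 1 = cf x 2 * cf y 1 - cf x 1 * cf y 2 := by
  simp [cf_br]
@[simp] theorem cf_br2 (x y : XX F) : cf (br x y) 2 = 0 := by simp [cf_br]
@[simp] theorem cf_br3 (x y : XX F) : cf (br x y) 3 = 0 := by simp [cf_br]

instance : LieRing (XX F) :=
  { (inferInstance : AddCommGroup (XX F)) with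
    bracket := br
    add_lie := by
      intro x y z; apply ext; intro i
      fin_cases i <;> simp <;> ring
    lie_add := by
      intro x y z; apply ext; intro i
      fin_cases i <;> simp <;> ring
    lie_self := by
      intro x; apply ext; intro i
      fin_cases i <;> simp <;> ring
    leibniz_lie := by
      intro x y z; apply ext; intro i
      fin_cases i <;> simp <;> ring }

instance : LieAlgebra F (XX F) :=
  { (inferInstance : Module F (XX F)) with
    lie_smul := by
      intro t x y; apply ext; intro i
      show cf (br x (t • y)) i = cf (t • br x y) i
      fin_cases i <;> simp <;> ring }

theorem lie_def (x y : XX F) : ⁅x, y⁆ = br x y := rfl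

@[simp] theorem cf_lie0 (x y : XX F) :
    cf ⁅x, y⁆ 0 = cf x 3 * cf y 1 - cf x 1 * cf y 3 + cf x 2 * cf y 0 - cf x 0 * cf y 2 :=
  cf_br0 x y
@[simp] theorem cf_lie1 (x y : XX F) : cf ⁅x, y⁆ 1 = cf x 2 * cf y 1 - cf x 1 * cf y 2 :=
  cf_br1 x y
@[simp] theorem cf_lie2 (x y : XX F) : cf ⁅x, y⁆ 2 = 0 := cf_br2 x y
@[simp] theorem cf_lie3 (x y : XX F) : cf ⁅x, y⁆ 3 = 0 := cf_br3 x y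

/-- linear equivalence with functions -/
def equivFun : XX F ≃ₗ[F] (Fin 4 → F) where
  toFun := cf
  invFun := mk
  map_add' _ _ := rfl
  map_smul' _ _ := rfl
  left_inv _ := rfl
  right_inv _ := rfl

instance : FiniteDimensional F (XX F) := Module.Finite.equiv (equivFun (F := F)).symm

theorem finrank_eq : Module.finrank F (XX F) = 4 := by
  rw [(equivFun (F := F)).finrank_eq]; simp

/-- the basis -/
noncomputable def bas : Module.Basis (Fin 4) F (XX F) := Module.Basis.ofEquivFun equivFun

@[simp] theorem cf_bas (i j : Fin 4) : cf (bas i : XX F) j = if j = i then 1 else 0 := by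
  have : (bas i : XX F) = equivFun.symm (Pi.single i 1) := by rw [bas, Module.Basis.coe_ofEquivFun]
  rw [this]
  show ((Pi.single i (1:F) : Fin 4 → F) j) = (if j = i then 1 else 0)
  rw [Pi.single_apply]

end XX

namespace XX

variable {F : Type} [Field F]

/-- the ideal span{e0,e1} -/
def Kid : LieIdeal F (XX F) where
  carrier := {x | cf x 2 = 0 ∧ cf x 3 = 0}
  add_mem' := by rintro a b ⟨ha2, ha3⟩ ⟨hb2, hb3⟩; exact ⟨by simp [ha2, hb2], by simp [ha3, hb3]⟩
  zero_mem' := ⟨rfl, rfl⟩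
  smul_mem' := by rintro c a ⟨ha2, ha3⟩; exact ⟨by simp [ha2], by simp [ha3]⟩
  lie_mem := by rintro x m ⟨hm2, hm3⟩; exact ⟨by simp, by simp⟩

/-- the nilradical, span{e0,e1,e3} -/
def Nid : LieIdeal F (XX F) where
  carrier := {x | cf x 2 = 0}
  add_mem' := by rintro a b ha hb; show cf (a + b) 2 = 0; simp [Set.mem_setOf_eq] at ha hb
                 simp [ha, hb]
  zero_mem' := rfl
  smul_mem' := by rintro c a ha; show cf (c • a) 2 = 0; simp [Set.mem_setOf_eq] at ha; simp [ha]
  lie_mem := by rintro x m hm; show cf ⁅x, m⁆ 2 = 0; simp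

theorem mem_Nid {x : XX F} : x ∈ (Nid : LieIdeal F (XX F)) ↔ cf x 2 = 0 := Iff.rfl

theorem coeIdeal_bracket (I : LieIdeal F (XX F)) (x y : I) :
    (↑⁅x, y⁆ : XX F) = ⁅(x : XX F), (y : XX F)⁆ := rfl

theorem solvable : LieAlgebra.IsSolvable (XX F) := by
  have h1 : LieAlgebra.derivedSeriesOfIdeal F (XX F) 1 ⊤ ≤ Kid := by
    rw [LieAlgebra.derivedSeriesOfIdeal_succ, LieAlgebra.derivedSeriesOfIdeal_zero,
      LieSubmodule.lieIdeal_oper_eq_span, LieSubmodule.lieSpan_le]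
    rintro z ⟨x, n, rfl⟩
    exact ⟨by simp, by simp⟩
  have hKK : ⁅(Kid : LieIdeal F (XX F)), (Kid : LieIdeal F (XX F))⁆ ≤ ⊥ := by
    rw [LieSubmodule.lieIdeal_oper_eq_span, LieSubmodule.lieSpan_le]
    rintro z ⟨x, n, rfl⟩
    obtain ⟨hx2, hx3⟩ := x.2
    obtain ⟨hn2, hn3⟩ := n.2
    simp only [SetLike.mem_coe, LieSubmodule.mem_bot]
    ext i; fin_cases i <;> simp [hx2, hx3, hn2, hn3]
  rw [LieAlgebra.isSolvable_iff (R := F)]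
  refine ⟨2, le_bot_iff.mp ?_⟩
  rw [LieAlgebra.derivedSeries_def, LieAlgebra.derivedSeriesOfIdeal_succ]
  exact le_trans (LieSubmodule.mono_lie h1 h1) hKK

theorem Nid_nilpotent : LieRing.IsNilpotent (Nid : LieIdeal F (XX F)) := by
  let S1 : LieSubmodule F (↥(Nid : LieIdeal F (XX F))) ↥(Nid : LieIdeal F (XX F)) :=
    { carrier := {m | cf (m : XX F) 1 = 0 ∧ cf (m : XX F) 2 = 0 ∧ cf (m : XX F) 3 = 0}
      add_mem' := by
        rintro a b ⟨ha1, ha2, ha3⟩ ⟨hb1, hb2, hb3⟩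
        refine ⟨?_, ?_, ?_⟩ <;> show cf ((a : XX F) + (b : XX F)) _ = 0 <;>
          simp [ha1, ha2, ha3, hb1, hb2, hb3]
      zero_mem' := ⟨rfl, rfl, rfl⟩
      smul_mem' := by
        rintro c a ⟨ha1, ha2, ha3⟩
        refine ⟨?_, ?_, ?_⟩ <;> show cf (c • (a : XX F)) _ = 0 <;> simp [ha1, ha2, ha3]
      lie_mem := by
        rintro x m ⟨hm1, hm2, hm3⟩
        refine ⟨?_, ?_, ?_⟩ <;> show cf (⁅(x : XX F), (m : XX F)⁆) _ = 0 <;>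
          simp [hm1, hm2, hm3, x.2] }
  have h1 : LieModule.lowerCentralSeries F (↥(Nid : LieIdeal F (XX F))) ↥(Nid : LieIdeal F (XX F)) 1 ≤ S1 := by
    rw [LieModule.lowerCentralSeries_succ, LieModule.lowerCentralSeries_zero,
      LieSubmodule.lieIdeal_oper_eq_span, LieSubmodule.lieSpan_le]
    rintro z ⟨x, n, rfl⟩
    have hx : cf ((x : ↥(Nid : LieIdeal F (XX F))) : XX F) 2 = 0 := x.1.2
    have hn : cf ((n : ↥(Nid : LieIdeal F (XX F))) : XX F) 2 = 0 := n.1.2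
    refine ⟨?_, ?_, ?_⟩ <;> simp [hx, hn]
  have h2 : LieModule.lowerCentralSeries F (↥(Nid : LieIdeal F (XX F))) ↥(Nid : LieIdeal F (XX F)) 2 ≤ ⊥ := by
    rw [LieModule.lowerCentralSeries_succ]
    refine le_trans (LieSubmodule.mono_lie (le_refl _) h1) ?_
    rw [LieSubmodule.lieIdeal_oper_eq_span, LieSubmodule.lieSpan_le]
    rintro z ⟨x, n, rfl⟩
    obtain ⟨hn1, hn2, hn3⟩ := n.2
    have hx : cf ((x : ↥(Nid : LieIdeal F (XX F))) : XX F) 2 = 0 := x.1.2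
    simp only [SetLike.mem_coe, LieSubmodule.mem_bot]
    apply Subtype.ext
    show (⁅((x : ↥(Nid : LieIdeal F (XX F))) : XX F), ((n : S1) : XX F)⁆) = (0 : XX F)
    ext i
    fin_cases i <;>
      simp [hn1, hn2, hn3, hx]
  exact LieModule.IsNilpotent.mk (h := le_bot_iff.mp h2)
theorem nilpotent_le_Nid (I : LieIdeal F (XX F)) (hI : LieRing.IsNilpotent I) :
    I ≤ (Nid : LieIdeal F (XX F)) := by
  by_contra hc
  obtain ⟨x, hxI, hxN⟩ := SetLike.not_le_iff_exists.mp hc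
  have hx2 : cf x 2 ≠ 0 := fun h => hxN h
  set e0 : XX F := bas 0 with he0
  have hbr : ⁅x, e0⁆ = cf x 2 • e0 := by
    ext i; fin_cases i <;> simp [he0]
  have he0I : e0 ∈ I := by
    have hA : ⁅e0, x⁆ ∈ I := I.lie_mem hxI
    have hB : ⁅x, e0⁆ ∈ I := by
      rw [← lie_skew]; exact neg_mem hA
    have hC := I.smul_mem (cf x 2)⁻¹ hB
    rwa [hbr, inv_smul_smul₀ hx2] at hC
  have hmem : ∀ k, (⟨e0, he0I⟩ : I) ∈ LieModule.lowerCentralSeries F I I k := by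
    intro k
    induction k with
    | zero => simp
    | succ k ih =>
      rw [LieModule.lowerCentralSeries_succ]
      have hb : ⁅(⟨x, hxI⟩ : I), (⟨e0, he0I⟩ : I)⁆ ∈
          ⁅(⊤ : LieIdeal F I), LieModule.lowerCentralSeries F I I k⁆ :=
        LieSubmodule.lie_mem_lie (LieSubmodule.mem_top _) ih
      have heq : (⟨e0, he0I⟩ : I) = (cf x 2)⁻¹ • ⁅(⟨x, hxI⟩ : I), (⟨e0, he0I⟩ : I)⁆ := by
        apply Subtype.ext
        show e0 = (cf x 2)⁻¹ • ⁅x, e0⁆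
        rw [hbr, inv_smul_smul₀ hx2]
      rw [heq]
      exact Submodule.smul_mem _ _ hb
  obtain ⟨k, hk⟩ := (LieModule.isNilpotent_iff F I I).mp hI
  have hz := hmem k
  rw [hk, LieSubmodule.mem_bot] at hz
  have hz0 : e0 = 0 := congrArg Subtype.val hz
  have h0 : cf e0 0 = 1 := by simp [he0]
  rw [hz0] at h0
  simp at h0

theorem nilrad_eq : nilrad F (XX F) = (Nid : LieIdeal F (XX F)) :=
  le_antisymm (sSup_le fun I hI => nilpotent_le_Nid I hI) (le_sSup Nid_nilpotent)

theorem Nid_span :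
    ((Nid : LieIdeal F (XX F)) : Submodule F (XX F)) =
      Submodule.span F {bas 0, bas 1, bas 3} := by
  apply le_antisymm
  · intro x hx
    have hx2 : cf x 2 = 0 := hx
    have hrep : x = cf x 0 • bas 0 + cf x 1 • bas 1 + cf x 3 • bas 3 := by
      ext i; fin_cases i <;> simp [hx2]
    rw [hrep]
    refine Submodule.add_mem _ (Submodule.add_mem _ ?_ ?_) ?_ <;>
      exact Submodule.smul_mem _ _ (Submodule.subset_span (by simp))
  · rw [Submodule.span_le]
    rintro y hy
    simp only [Set.mem_insert_iff, Set.mem_singleton_iff] at hy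
    rcases hy with rfl | rfl | rfl <;>
      exact (show cf _ 2 = 0 by simp)

/-- the derivation, as a linear map -/
def Dlin : XX F →ₗ[F] XX F where
  toFun x := mk fun i => if i = 1 then cf x 0 else if i = 2 then cf x 3 else 0
  map_add' x y := by
    ext i; simp only [cf_mk, cf_add]; split_ifs <;> first | rfl | ring1
  map_smul' c x := by
    ext i; simp only [cf_mk, cf_smul]; split_ifs <;> first | rfl | ring1 | simp

theorem cf_Dlin (x : XX F) (i : Fin 4) :
    cf (Dlin x) i = if i = 1 then cf x 0 else if i = 2 then cf x 3 else 0 := rfl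

@[simp] theorem cf_Dlin0 (x : XX F) : cf (Dlin x) 0 = 0 := by simp [cf_Dlin]
@[simp] theorem cf_Dlin1 (x : XX F) : cf (Dlin x) 1 = cf x 0 := by simp [cf_Dlin]
@[simp] theorem cf_Dlin2 (x : XX F) : cf (Dlin x) 2 = cf x 3 := by simp [cf_Dlin]
@[simp] theorem cf_Dlin3 (x : XX F) : cf (Dlin x) 3 = 0 := by simp [cf_Dlin]

/-- the derivation -/
def DD [CharP F 2] : LieDerivation F (XX F) (XX F) where
  toLinearMap := Dlin
  leibniz' a b := by
    have h2 : (2 : F) = 0 := by exact_mod_cast CharP.cast_eq_zero F 2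
    show Dlin ⁅a, b⁆ = ⁅a, Dlin b⁆ - ⁅b, Dlin a⁆
    ext i
    fin_cases i <;> (try simp) <;>
      first
        | rfl
        | ring1
        | linear_combination (cf a 3 * cf b 0 - cf a 0 * cf b 3) * h2
        | linear_combination (cf a 0 * cf b 3 - cf a 3 * cf b 0) * h2

@[simp] theorem DD_apply [CharP F 2] (x : XX F) : (DD : LieDerivation F (XX F) (XX F)) x = Dlin x := rfl

end XX

/-- Over a field of characteristic `2` there is a `4`-dimensional solvable Lie algebra
whose nilradical is not preserved by some derivation. -/
theorem stmt10 (F : Type) [Field F] [CharP F 2] :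
    ∃ (L : Type) (_ : LieRing L) (_ : LieAlgebra F L) (b : Module.Basis (Fin 4) F L),
      FiniteDimensional F L ∧ Module.finrank F L = 4 ∧ LieAlgebra.IsSolvable L ∧
      ⁅b 3, b 1⁆ = b 0 ∧ ⁅b 2, b 0⁆ = b 0 ∧ ⁅b 2, b 1⁆ = b 1 ∧
      ⁅b 0, b 1⁆ = 0 ∧ ⁅b 0, b 3⁆ = 0 ∧ ⁅b 2, b 3⁆ = 0 ∧
      ((nilrad F L : Submodule F L) = Submodule.span F {b 0, b 1, b 3}) ∧
      ∃ D : LieDerivation F L L,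
        D (b 0) = b 1 ∧ D (b 1) = 0 ∧ D (b 2) = 0 ∧ D (b 3) = b 2 ∧
        ¬ (∀ x ∈ nilrad F L, D x ∈ nilrad F L) := by
  classical
  refine ⟨XX F, inferInstance, inferInstance, XX.bas, inferInstance, XX.finrank_eq,
    XX.solvable, ?_, ?_, ?_, ?_, ?_, ?_, ?_, XX.DD, ?_, ?_, ?_, ?_, ?_⟩
  · ext i; fin_cases i <;> simp
  · ext i; fin_cases i <;> simp
  · ext i; fin_cases i <;> simp
  · ext i; fin_cases i <;> simp
  · ext i; fin_cases i <;> simp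
  · ext i; fin_cases i <;> simp
  · rw [XX.nilrad_eq]; exact XX.Nid_span
  · ext i; fin_cases i <;> simp
  · ext i; fin_cases i <;> simp
  · ext i; fin_cases i <;> simp
  · ext i; fin_cases i <;> simp
  · intro h
    have h3 : XX.bas 3 ∈ nilrad F (XX F) := by
      rw [XX.nilrad_eq]; exact (by simp : XX.cf (XX.bas 3 : XX F) 2 = 0)
    have h4 := h _ h3
    rw [XX.nilrad_eq] at h4
    have h5 : XX.cf (XX.DD (XX.bas 3) : XX F) 2 = 0 := h4
    simp at h5
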